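/- arXiv:2311.15191 — 2 statements merged into one kernel-verified Lean document; each statement's English description precedes it below -/
import Mathlib

section
/- If J is a proper binomial ideal of the quantum torus T_q, then L = {α ∈ ℤ^n | x^α ∈ K^× + J} is a sublattice of Γ_Z, and there is a unique group homomorphism ρ : L → K^× such that J = I(L,ρ) = ⟨x^α − c(α)^{-1}ρ(α) | α ∈ L⟩. -/
/-- A quantum torus over `K` attached to a multiplicatively skew-symmetric matrix `q`:
an algebra `T` with basis `(x^α)_{α ∈ ℤⁿ}` and multiplication
`x^α x^β = d(α,β) x^{α+β}` where `d(α,β) = ∏_{i>j} q_{ij}^{α_i β_j}`. -/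
structure QuantumTorus (K : Type) [Field K] (n : ℕ) (T : Type) [Ring T] [Algebra K T] where
  q : Fin n → Fin n → Kˣ
  q_diag : ∀ i, q i i = 1
  q_skew : ∀ i j, q j i = (q i j)⁻¹
  d : (Fin n → ℤ) → (Fin n → ℤ) → Kˣ
  d_eq : ∀ α β, d α β = ∏ i : Fin n, ∏ j : Fin n,
      if (j : ℕ) < (i : ℕ) then q i j ^ (α i * β j) else 1
  x : (Fin n → ℤ) → T
  basis : Module.Basis (Fin n → ℤ) K T
  basis_eq : ∀ α, basis α = x α
  x_mul : ∀ α β, x α * x β = ((d α β : K)) • x (α + β)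
  x_zero : x 0 = 1

namespace QuantumTorus

variable {K : Type} [Field K] {n : ℕ} {T : Type} [Ring T] [Algebra K T]

/-- `α` lies in the central lattice `Γ_Z`, i.e. `x^α` is central in `T_q`. -/
def IsCentral (Q : QuantumTorus K n T) (α : Fin n → ℤ) : Prop :=
  ∀ t : T, Q.x α * t = t * Q.x α

/-- A binomial ideal: a two-sided ideal generated by nonzero elements
`λ x^α + μ x^β`. -/
def IsBinomialIdeal (Q : QuantumTorus K n T) (J : TwoSidedIdeal T) : Prop :=
  ∃ S : Set T,
    (∀ b ∈ S, b ≠ 0 ∧ ∃ (l m : K) (α β : Fin n → ℤ), b = l • Q.x α + m • Q.x β) ∧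
    J = TwoSidedIdeal.span S

/-- The scalars `c : Γ_Z → Kˣ` arising from a fixed algebra isomorphism
`φ : KΓ_Z ≅ Z(T_q)`, `φ(z_γ) = c(γ) x^γ`; the defining property is that
`γ ↦ c(γ) x^γ` is multiplicative on the central lattice and `c 0 = 1`. -/
def IsGoodC (Q : QuantumTorus K n T) (c : (Fin n → ℤ) → Kˣ) : Prop :=
  c 0 = 1 ∧ ∀ α β : Fin n → ℤ, Q.IsCentral α → Q.IsCentral β →
    (((c α : K)) • Q.x α) * (((c β : K)) • Q.x β) = ((c (α + β) : K)) • Q.x (α + β)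

/-- The binomial ideal `I(L,ρ) = ⟨ x^α - c(α)⁻¹ ρ(α) : α ∈ L ⟩`. -/
def binIdeal (Q : QuantumTorus K n T) (c : (Fin n → ℤ) → Kˣ)
    (L : AddSubgroup (Fin n → ℤ)) (ρ : L →+ Additive Kˣ) : TwoSidedIdeal T :=
  TwoSidedIdeal.span
    {t | ∃ α : L, t = Q.x (α : Fin n → ℤ) -
      ((((c (α : Fin n → ℤ))⁻¹ * Additive.toMul (ρ α) : Kˣ) : K)) • (1 : T)}

end QuantumTorus

/-- A (two-sided) prime ideal of a possibly noncommutative ring. -/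
def IsPrimeTSI {R : Type} [Ring R] (P : TwoSidedIdeal R) : Prop :=
  P ≠ ⊤ ∧ ∀ a b : R, (∀ r : R, a * r * b ∈ P) → a ∈ P ∨ b ∈ P

/-- The prime radical of a two-sided ideal: the intersection of the prime
two-sided ideals containing it. -/
def primeRadical {R : Type} [Ring R] (I : TwoSidedIdeal R) : TwoSidedIdeal R :=
  sInf {P : TwoSidedIdeal R | IsPrimeTSI P ∧ I ≤ P}

section Helpers

namespace QuantumTorus

variable {K : Type} [Field K] {n : ℕ} {T : Type} [Ring T] [Algebra K T]
variable (Q : QuantumTorus K n T)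

lemma x_ne_zero (α : Fin n → ℤ) : Q.x α ≠ 0 := Q.basis_eq α ▸ Q.basis.ne_zero α

lemma smul_x_cancel {a b : K} {α : Fin n → ℤ} (h : a • Q.x α = b • Q.x α) : a = b := by
  have h1 : (a - b) • Q.x α = 0 := by rw [sub_smul, sub_eq_zero]; exact h
  rcases smul_eq_zero.1 h1 with h2 | h2
  · exact sub_eq_zero.1 h2
  · exact absurd h2 (Q.x_ne_zero α)

lemma d_cocycle (α β γ : Fin n → ℤ) :
    (Q.d α β : K) * Q.d (α + β) γ = Q.d β γ * Q.d α (β + γ) := by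
  have h1 : (Q.x α * Q.x β) * Q.x γ = Q.x α * (Q.x β * Q.x γ) := mul_assoc _ _ _
  rw [Q.x_mul, smul_mul_assoc, Q.x_mul, Q.x_mul, mul_smul_comm, Q.x_mul, smul_smul, smul_smul,
    ← add_assoc] at h1
  exact Q.smul_x_cancel h1

lemma d_zero_right (α : Fin n → ℤ) : Q.d α 0 = 1 := by
  have h : (Q.d α 0 : K) • Q.x α = (1 : K) • Q.x α := by
    rw [one_smul]
    conv_rhs => rw [← mul_one (Q.x α), ← Q.x_zero, Q.x_mul, add_zero]
  exact Units.ext (by simpa using Q.smul_x_cancel h)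

lemma d_sub (α β : Fin n → ℤ) : (Q.d (α - β) β : K) * Q.d α (-β) = Q.d β (-β) := by
  have h := Q.d_cocycle (α - β) β (-β)
  rw [sub_add_cancel, add_neg_cancel, Q.d_zero_right, Units.val_one, mul_one] at h
  exact h

lemma smul_mem_J (J : TwoSidedIdeal T) (k : K) {t : T} (ht : t ∈ J) : k • t ∈ J := by
  rw [Algebra.smul_def]; exact J.mul_mem_left _ _ ht

lemma span_le' {s : Set T} {I : TwoSidedIdeal T} (h : s ⊆ I) : TwoSidedIdeal.span s ≤ I :=
  fun _ hx => TwoSidedIdeal.mem_span_iff.1 hx I h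

lemma scalar_eq_zero_of_smul_x_mem {J : TwoSidedIdeal T} (hJtop : J ≠ ⊤) {k : K}
    {α : Fin n → ℤ} (h : k • Q.x α ∈ J) : k = 0 := by
  by_contra hk
  have h1 : Q.x α ∈ J := by
    simpa [smul_smul, inv_mul_cancel₀ hk] using QuantumTorus.smul_mem_J J k⁻¹ h
  have h2 : (Q.d α (-α) : K) • Q.x (α + -α) ∈ J := by
    rw [← Q.x_mul]; exact J.mul_mem_right _ _ h1
  have h3 : Q.x (α + -α) ∈ J := by
    simpa [smul_smul, inv_mul_cancel₀ (Units.ne_zero (Q.d α (-α)))] using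
      QuantumTorus.smul_mem_J J ((Q.d α (-α) : K))⁻¹ h2
  rw [add_neg_cancel, Q.x_zero] at h3
  exact hJtop (J.eq_top h3)

lemma lam_unique {J : TwoSidedIdeal T} (hJtop : J ≠ ⊤) {α : Fin n → ℤ} {a b : K}
    (ha : Q.x α - a • 1 ∈ J) (hb : Q.x α - b • 1 ∈ J) : a = b := by
  have h1 : (b - a) • Q.x 0 ∈ J := by
    rw [Q.x_zero, sub_smul]
    have := J.sub_mem ha hb
    convert this using 1
    abel
  have := Q.scalar_eq_zero_of_smul_x_mem hJtop h1
  exact (sub_eq_zero.1 this).symm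

lemma unit_smul_x_sub_mem {J : TwoSidedIdeal T} {u a : K} (hu : u ≠ 0) {γ : Fin n → ℤ}
    (h : u • Q.x γ - a • 1 ∈ J) : Q.x γ - (u⁻¹ * a) • 1 ∈ J := by
  have h2 := QuantumTorus.smul_mem_J J u⁻¹ h
  rwa [smul_sub, smul_smul, smul_smul, inv_mul_cancel₀ hu, one_smul] at h2

lemma memL_add {J : TwoSidedIdeal T} {α β : Fin n → ℤ} {a b : K}
    (ha : Q.x α - a • 1 ∈ J) (hb : Q.x β - b • 1 ∈ J) :
    Q.x (α + β) - (((Q.d α β : K))⁻¹ * (a * b)) • 1 ∈ J := by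
  have h1 : (Q.x α - a • 1) * Q.x β ∈ J := J.mul_mem_right _ _ ha
  have h2 : a • (Q.x β - b • 1) ∈ J := QuantumTorus.smul_mem_J J a hb
  have h3 : (Q.d α β : K) • Q.x (α + β) - (a * b) • 1 ∈ J := by
    have := J.add_mem h1 h2
    convert this using 1
    rw [sub_mul, smul_mul_assoc, one_mul, Q.x_mul, smul_sub, smul_smul]
    abel
  exact Q.unit_smul_x_sub_mem (Units.ne_zero _) h3

lemma memL_neg {J : TwoSidedIdeal T} {α : Fin n → ℤ} {a : K} (ha0 : a ≠ 0)
    (ha : Q.x α - a • 1 ∈ J) : Q.x (-α) - (a⁻¹ * (Q.d α (-α) : K)) • 1 ∈ J := by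
  have h1 : (Q.x α - a • 1) * Q.x (-α) ∈ J := J.mul_mem_right _ _ ha
  have h3 : a • Q.x (-α) - (Q.d α (-α) : K) • 1 ∈ J := by
    have := J.neg_mem h1
    convert this using 1
    rw [sub_mul, smul_mul_assoc, one_mul, Q.x_mul, add_neg_cancel, Q.x_zero]
    abel
  exact Q.unit_smul_x_sub_mem ha0 h3

lemma d_comm_of_mem {J : TwoSidedIdeal T} (hJtop : J ≠ ⊤) {α : Fin n → ℤ} {a : K}
    (h : Q.x α - a • 1 ∈ J) (β : Fin n → ℤ) : Q.d α β = Q.d β α := by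
  have h1 : Q.x β * (Q.x α - a • 1) - (Q.x α - a • 1) * Q.x β ∈ J :=
    J.sub_mem (J.mul_mem_left _ _ h) (J.mul_mem_right _ _ h)
  have h2 : ((Q.d β α : K) - (Q.d α β : K)) • Q.x (α + β) ∈ J := by
    convert h1 using 1
    rw [mul_sub, sub_mul, Q.x_mul, Q.x_mul, mul_smul_comm, mul_one, smul_mul_assoc, one_mul,
      sub_smul, add_comm β α]
    abel
  have h3 := Q.scalar_eq_zero_of_smul_x_mem hJtop h2
  exact (Units.ext (sub_eq_zero.1 h3)).symm

lemma central_of_mem {J : TwoSidedIdeal T} (hJtop : J ≠ ⊤) {α : Fin n → ℤ} {a : K}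
    (h : Q.x α - a • 1 ∈ J) : Q.IsCentral α := by
  intro t
  have key : LinearMap.mulLeft K (Q.x α) = LinearMap.mulRight K (Q.x α) := by
    apply Q.basis.ext
    intro γ
    rw [LinearMap.mulLeft_apply, LinearMap.mulRight_apply, Q.basis_eq, Q.x_mul, Q.x_mul,
      Q.d_comm_of_mem hJtop h γ, add_comm α γ]
  have := congrArg (fun f => f t) key
  simpa using this

lemma c_mul {c : (Fin n → ℤ) → Kˣ} (hc : Q.IsGoodC c) {α β : Fin n → ℤ}
    (hα : Q.IsCentral α) (hβ : Q.IsCentral β) :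
    (c (α + β) : K) = (c α : K) * (c β : K) * (Q.d α β : K) := by
  have h := hc.2 α β hα hβ
  rw [smul_mul_assoc, mul_smul_comm, Q.x_mul, smul_smul, smul_smul] at h
  have := Q.smul_x_cancel h.symm
  simpa [mul_assoc] using this

end QuantumTorus

end Helpers

/-- If `J` is a proper binomial ideal of `T_q`, then
`L = {α : x^α ∈ Kˣ + J}` is a sublattice of the central lattice `Γ_Z` and
there is a unique `ρ ∈ Hom(L, Kˣ)` with `J = I(L,ρ)`. -/


theorem proper_binomial_eq_binIdeal {K : Type} [Field K] {n : ℕ} {T : Type} [Ring T]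
    [Algebra K T] (Q : QuantumTorus K n T) (c : (Fin n → ℤ) → Kˣ) (hc : Q.IsGoodC c)
    (J : TwoSidedIdeal T) (hJtop : J ≠ ⊤) (hJ : Q.IsBinomialIdeal J) :
    ∃ L : AddSubgroup (Fin n → ℤ),
      (L : Set (Fin n → ℤ)) = {α | ∃ lam : Kˣ, Q.x α - ((lam : K)) • (1 : T) ∈ J} ∧
      (∀ α ∈ L, Q.IsCentral α) ∧
      ∃! ρ : L →+ Additive Kˣ, J = Q.binIdeal c L ρ := by
  classical
  obtain ⟨S, hS, hJspan⟩ := hJ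
  let L : AddSubgroup (Fin n → ℤ) :=
    { carrier := {α | ∃ lam : Kˣ, Q.x α - ((lam : K)) • (1 : T) ∈ J}
      zero_mem' := ⟨1, by simp [Q.x_zero]⟩
      add_mem' := by
        rintro a b ⟨la, hla⟩ ⟨lb, hlb⟩
        exact ⟨(Q.d a b)⁻¹ * (la * lb), by
          simpa [Units.val_mul] using Q.memL_add hla hlb⟩
      neg_mem' := by
        rintro a ⟨la, hla⟩
        exact ⟨la⁻¹ * Q.d a (-a), by
          simpa [Units.val_mul] using Q.memL_neg la.ne_zero hla⟩ }
  have hmemL : ∀ α : L, ∃ lam : Kˣ, Q.x (α : Fin n → ℤ) - ((lam : K)) • (1 : T) ∈ J :=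
    fun α => α.2
  choose lam hlam using hmemL
  have hcentral : ∀ α ∈ L, Q.IsCentral α := by
    rintro α ⟨lamα, hα⟩
    exact Q.central_of_mem hJtop hα
  -- additivity data
  have hlam_add : ∀ a b : L, (lam (a + b) : K) =
      ((Q.d (a : Fin n → ℤ) (b : Fin n → ℤ) : K))⁻¹ * ((lam a : K) * (lam b : K)) :=
    fun a b => Q.lam_unique hJtop (hlam (a + b)) (Q.memL_add (hlam a) (hlam b))
  have hcadd : ∀ a b : L, (c ((a : Fin n → ℤ) + (b : Fin n → ℤ)) : K) =
      (c (a : Fin n → ℤ) : K) * (c (b : Fin n → ℤ) : K) *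
        (Q.d (a : Fin n → ℤ) (b : Fin n → ℤ) : K) :=
    fun a b => Q.c_mul hc (hcentral a a.2) (hcentral b b.2)
  let ρ : L →+ Additive Kˣ := AddMonoidHom.mk'
    (fun a => Additive.ofMul (c (a : Fin n → ℤ) * lam a)) (by
      intro a b
      have huv : c ((a : Fin n → ℤ) + (b : Fin n → ℤ)) * lam (a + b) =
          (c (a : Fin n → ℤ) * lam a) * (c (b : Fin n → ℤ) * lam b) := by
        apply Units.ext
        push_cast [Units.val_mul]
        rw [hlam_add a b, hcadd a b]
        have hd0 : (Q.d (a : Fin n → ℤ) (b : Fin n → ℤ) : K) ≠ 0 := Units.ne_zero _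
        field_simp
      rw [← ofMul_mul]
      exact congrArg _ huv)
  have htoMul : ∀ a : L, Additive.toMul (ρ a) = c (a : Fin n → ℤ) * lam a := fun a => rfl
  have hgen : ∀ a : L, ((c (a : Fin n → ℤ))⁻¹ * Additive.toMul (ρ a) : Kˣ) = lam a := by
    intro a
    rw [htoMul a, inv_mul_cancel_left]
  have le1 : Q.binIdeal c L ρ ≤ J := by
    apply QuantumTorus.span_le'
    rintro t ⟨a, rfl⟩
    rw [hgen a]
    exact hlam a
  have le2 : J ≤ Q.binIdeal c L ρ := by
    conv_lhs => rw [hJspan]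
    apply QuantumTorus.span_le'
    intro b hb
    obtain ⟨hb0, l, m, α, β, rfl⟩ := hS b hb
    have hbJ : l • Q.x α + m • Q.x β ∈ J := hJspan ▸ TwoSidedIdeal.subset_span hb
    by_cases hl : l = 0
    · subst hl
      rw [zero_smul, zero_add] at hbJ hb0 ⊢
      exact absurd (by rw [Q.scalar_eq_zero_of_smul_x_mem hJtop hbJ, zero_smul]) hb0
    by_cases hm : m = 0
    · subst hm
      rw [zero_smul, add_zero] at hbJ hb0 ⊢
      exact absurd (by rw [Q.scalar_eq_zero_of_smul_x_mem hJtop hbJ, zero_smul]) hb0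
    by_cases hab : α = β
    · subst hab
      rw [← add_smul] at hbJ hb0 ⊢
      exact absurd (by rw [Q.scalar_eq_zero_of_smul_x_mem hJtop hbJ, zero_smul]) hb0
    -- main case
    have h1 : (l • Q.x α + m • Q.x β) * Q.x (-β) ∈ J := J.mul_mem_right _ _ hbJ
    rw [add_mul, smul_mul_assoc, smul_mul_assoc, Q.x_mul, Q.x_mul, add_neg_cancel, Q.x_zero,
      smul_smul, smul_smul, ← sub_eq_add_neg] at h1
    set u : K := l * (Q.d α (-β) : K) with hu_def
    have hu : u ≠ 0 := mul_ne_zero hl (Units.ne_zero _)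
    have h2 : u • Q.x (α - β) - (-(m * (Q.d β (-β) : K))) • (1 : T) ∈ J := by
      rw [neg_smul, sub_neg_eq_add]; exact h1
    have h3 := Q.unit_smul_x_sub_mem hu h2
    set ν : K := u⁻¹ * -(m * (Q.d β (-β) : K)) with hν_def
    have hνne : ν ≠ 0 :=
      mul_ne_zero (inv_ne_zero hu) (neg_ne_zero.2 (mul_ne_zero hm (Units.ne_zero _)))
    have haL : (α - β) ∈ L := ⟨Units.mk0 ν hνne, by simpa using h3⟩
    set aL : L := ⟨α - β, haL⟩ with haL_def
    have hlamval : (lam aL : K) = ν := Q.lam_unique hJtop (hlam aL) h3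
    have hg : Q.x (α - β) - ((lam aL : K)) • (1 : T) ∈ Q.binIdeal c L ρ := by
      have h4 := TwoSidedIdeal.subset_span (s :=
        {t | ∃ a : L, t = Q.x (a : Fin n → ℤ) -
          ((((c (a : Fin n → ℤ))⁻¹ * Additive.toMul (ρ a) : Kˣ) : K)) • (1 : T)})
        ⟨aL, rfl⟩
      rwa [hgen aL] at h4
    have hmul : (Q.x (α - β) - ((lam aL : K)) • (1 : T)) * Q.x β ∈ Q.binIdeal c L ρ :=
      (Q.binIdeal c L ρ).mul_mem_right _ _ hg
    have hsm := QuantumTorus.smul_mem_J (Q.binIdeal c L ρ)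
      (l * ((Q.d (α - β) β : K))⁻¹) hmul
    have heq : l • Q.x α + m • Q.x β =
        (l * ((Q.d (α - β) β : K))⁻¹) • ((Q.x (α - β) - ((lam aL : K)) • (1 : T)) * Q.x β) := by
      rw [sub_mul, smul_mul_assoc, one_mul, Q.x_mul, sub_add_cancel, smul_sub, smul_smul,
        smul_smul]
      have hD : (Q.d (α - β) β : K) ≠ 0 := Units.ne_zero _
      have s1 : l * ((Q.d (α - β) β : K))⁻¹ * (Q.d (α - β) β : K) = l := by field_simp
      have s2 : l * ((Q.d (α - β) β : K))⁻¹ * (lam aL : K) = -m := by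
        rw [hlamval, hν_def, hu_def]
        have hds := Q.d_sub α β
        have hA : (Q.d α (-β) : K) ≠ 0 := Units.ne_zero _
        field_simp
        linear_combination hds
      rw [s1, s2, neg_smul, sub_neg_eq_add]
    rw [heq]
    exact hsm
  refine ⟨L, rfl, hcentral, ρ, le_antisymm le2 le1, ?_⟩
  intro ρ' h'
  ext a
  have hg' : Q.x (a : Fin n → ℤ) -
      ((((c (a : Fin n → ℤ))⁻¹ * Additive.toMul (ρ' a) : Kˣ) : K)) • (1 : T) ∈ J := by
    rw [h']
    exact TwoSidedIdeal.subset_span ⟨a, rfl⟩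
  have hK := Q.lam_unique hJtop hg' (hlam a)
  have hu : ((c (a : Fin n → ℤ))⁻¹ * Additive.toMul (ρ' a) : Kˣ) = lam a := Units.ext hK
  have h5 : Additive.toMul (ρ' a) = c (a : Fin n → ℤ) * lam a := by
    rw [← hu, mul_inv_cancel_left]
  apply Additive.toMul.injective
  rw [h5, htoMul a]
end

section
/- For a sublattice L of Γ_Z and ρ ∈ Hom(L,K^×), the quotient T_q/I(L,ρ) is a twisted group algebra of ℤ^n/L over K, with K-basis (x^σ + I(L,ρ) | σ ∈ S) for any transversal S of L in ℤ^n. -/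
namespace QuantumTorus
variable {K : Type} [Field K] {n : ℕ} {T : Type} [Ring T] [Algebra K T]

section AuxLemmas
variable (Q : QuantumTorus K n T)

lemma aux_x_ne_zero (γ : Fin n → ℤ) : Q.x γ ≠ 0 := by
  rw [← Q.basis_eq]; exact Q.basis.ne_zero γ

lemma aux_smul_cancel {a b : K} {γ : Fin n → ℤ} (h : a • Q.x γ = b • Q.x γ) : a = b := by
  have h2 : (a - b) • Q.x γ = 0 := by rw [sub_smul, h, sub_self]
  rcases smul_eq_zero.mp h2 with h' | h'
  · exact sub_eq_zero.mp h'
  · exact absurd h' (Q.aux_x_ne_zero γ)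

lemma aux_d_add_left (α β γ : Fin n → ℤ) : Q.d (α + β) γ = Q.d α γ * Q.d β γ := by
  rw [Q.d_eq, Q.d_eq, Q.d_eq, ← Finset.prod_mul_distrib]
  refine Finset.prod_congr rfl fun i _ => ?_
  rw [← Finset.prod_mul_distrib]
  refine Finset.prod_congr rfl fun j _ => ?_
  by_cases h : (j : ℕ) < (i : ℕ)
  · simp [h, Pi.add_apply, add_mul, zpow_add]
  · simp [h]

lemma aux_d_add_right (α β γ : Fin n → ℤ) : Q.d α (β + γ) = Q.d α β * Q.d α γ := by
  rw [Q.d_eq, Q.d_eq, Q.d_eq, ← Finset.prod_mul_distrib]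
  refine Finset.prod_congr rfl fun i _ => ?_
  rw [← Finset.prod_mul_distrib]
  refine Finset.prod_congr rfl fun j _ => ?_
  by_cases h : (j : ℕ) < (i : ℕ)
  · simp [h, Pi.add_apply, mul_add, zpow_add]
  · simp [h]

lemma aux_d_zero_left (γ : Fin n → ℤ) : Q.d 0 γ = 1 := by
  rw [Q.d_eq]
  refine Finset.prod_eq_one fun i _ => Finset.prod_eq_one fun j _ => ?_
  by_cases h : (j : ℕ) < (i : ℕ) <;> simp [h]

lemma aux_d_zero_right (γ : Fin n → ℤ) : Q.d γ 0 = 1 := by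
  rw [Q.d_eq]
  refine Finset.prod_eq_one fun i _ => Finset.prod_eq_one fun j _ => ?_
  by_cases h : (j : ℕ) < (i : ℕ) <;> simp [h]

lemma aux_d_neg_left (α γ : Fin n → ℤ) : Q.d (-α) γ = (Q.d α γ)⁻¹ := by
  have h := Q.aux_d_add_left α (-α) γ
  rw [add_neg_cancel, aux_d_zero_left] at h
  exact (inv_eq_of_mul_eq_one_right h.symm).symm

lemma aux_d_neg_right (α γ : Fin n → ℤ) : Q.d α (-γ) = (Q.d α γ)⁻¹ := by
  have h := Q.aux_d_add_right α γ (-γ)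
  rw [add_neg_cancel, aux_d_zero_right] at h
  exact (inv_eq_of_mul_eq_one_right h.symm).symm

lemma aux_d_sub_left (α β γ : Fin n → ℤ) : Q.d (α - β) γ = Q.d α γ * (Q.d β γ)⁻¹ := by
  rw [sub_eq_add_neg, aux_d_add_left, aux_d_neg_left]

lemma aux_d_sub_right (α β γ : Fin n → ℤ) : Q.d α (β - γ) = Q.d α β * (Q.d α γ)⁻¹ := by
  rw [sub_eq_add_neg, aux_d_add_right, aux_d_neg_right]

lemma aux_d_comm {α : Fin n → ℤ} (hα : Q.IsCentral α) (β : Fin n → ℤ) :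
    Q.d α β = Q.d β α := by
  have h := hα (Q.x β)
  rw [Q.x_mul, Q.x_mul, add_comm β α] at h
  exact Units.ext (Q.aux_smul_cancel h)

end AuxLemmas
end QuantumTorus


/-- `T_q/I(L,ρ)` is a twisted group algebra of `ℤⁿ/L` over `K`, with `K`-basis
the cosets `x^σ + I(L,ρ)` for any transversal (section) `σ` of `L` in `ℤⁿ`.
The quotient is represented by any surjective algebra map `ψ` with kernel `I(L,ρ)`. -/
theorem quotient_binIdeal_twisted_group_algebra {K : Type} [Field K] {n : ℕ}
    {T : Type} [Ring T] [Algebra K T] (Q : QuantumTorus K n T)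
    (c : (Fin n → ℤ) → Kˣ) (hc : Q.IsGoodC c)
    (L : AddSubgroup (Fin n → ℤ)) (hL : ∀ α ∈ L, Q.IsCentral α)
    (ρ : L →+ Additive Kˣ)
    (R : Type) [Ring R] [Algebra K R] (ψ : T →ₐ[K] R)
    (hsurj : Function.Surjective ψ)
    (hker : ∀ t : T, ψ t = 0 ↔ t ∈ Q.binIdeal c L ρ)
    (σ : ((Fin n → ℤ) ⧸ L) → (Fin n → ℤ))
    (hσ : ∀ g : (Fin n → ℤ) ⧸ L, QuotientAddGroup.mk (σ g) = g) :
    (∃ bas : Module.Basis ((Fin n → ℤ) ⧸ L) K R, ∀ g, bas g = ψ (Q.x (σ g))) ∧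
    ∃ e : ((Fin n → ℤ) ⧸ L) → ((Fin n → ℤ) ⧸ L) → Kˣ,
      ∀ g h, ψ (Q.x (σ g)) * ψ (Q.x (σ h)) = ((e g h : K)) • ψ (Q.x (σ (g + h))) := by
  classical
  have hπadd : ∀ a b : Fin n → ℤ,
      (QuotientAddGroup.mk (a + b) : (Fin n → ℤ) ⧸ L)
        = QuotientAddGroup.mk a + QuotientAddGroup.mk b := fun a b => rfl
  have hπsub : ∀ a b : Fin n → ℤ,
      (QuotientAddGroup.mk (a - b) : (Fin n → ℤ) ⧸ L)
        = QuotientAddGroup.mk a - QuotientAddGroup.mk b := fun a b => rfl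
  have hmem : ∀ β : Fin n → ℤ, β - σ (QuotientAddGroup.mk β) ∈ L := by
    intro β
    refine (QuotientAddGroup.eq_zero_iff _).mp ?_
    rw [hπsub, hσ, sub_self]
  have hσL : σ 0 ∈ L := (QuotientAddGroup.eq_zero_iff _).mp (hσ 0)
  -- the unit-valued function on the lattice
  set u : (Fin n → ℤ) → Kˣ :=
    fun a => if h : a ∈ L then (c a)⁻¹ * Additive.toMul (ρ ⟨a, h⟩) else 1 with hu
  have hu_mem : ∀ {a : Fin n → ℤ} (ha : a ∈ L),
      u a = (c a)⁻¹ * Additive.toMul (ρ ⟨a, ha⟩) := by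
    intro a ha; rw [hu]; simp [ha]
  have hu_zero : u 0 = 1 := by
    rw [hu_mem (zero_mem L), hc.1]
    have h0 : (⟨0, zero_mem L⟩ : L) = 0 := rfl
    rw [h0, map_zero]
    simp
  -- multiplicativity of c against d
  have hc_mul : ∀ a b : Fin n → ℤ, a ∈ L → b ∈ L →
      c (a + b) = c a * c b * Q.d a b := by
    intro a b ha hb
    have h := hc.2 a b (hL a ha) (hL b hb)
    rw [smul_mul_assoc, mul_smul_comm, Q.x_mul, smul_smul, smul_smul] at h
    refine Units.ext ?_
    push_cast
    linear_combination -Q.aux_smul_cancel h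
  have hu_add : ∀ a b : Fin n → ℤ, a ∈ L → b ∈ L →
      u (a + b) = (Q.d a b)⁻¹ * u a * u b := by
    intro a b ha hb
    rw [hu_mem (add_mem ha hb), hu_mem ha, hu_mem hb, hc_mul a b ha hb]
    have h0 : (⟨a + b, add_mem ha hb⟩ : L) = ⟨a, ha⟩ + ⟨b, hb⟩ := rfl
    rw [h0, map_add, toMul_add, mul_inv, mul_inv]
    simp only [mul_comm, mul_assoc, mul_left_comm]
  -- the normalizing scalars
  set s : (Fin n → ℤ) → Kˣ :=
    fun β => u (β - σ (QuotientAddGroup.mk β))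
      * (Q.d (σ (QuotientAddGroup.mk β)) (β - σ (QuotientAddGroup.mk β)))⁻¹ with hs
  have hσσ : ∀ g, σ (QuotientAddGroup.mk (σ g)) = σ g := by intro g; rw [hσ]
  have hs_σ : ∀ g, s (σ g) = 1 := by
    intro g
    rw [hs]
    simp only [hσσ, sub_self, hu_zero, Q.aux_d_zero_right, inv_one, mul_one]
  -- images of lattice points
  have hyL : ∀ (a : Fin n → ℤ) (ha : a ∈ L), ψ (Q.x a) = ((u a : K)) • 1 := by
    intro a ha
    have hgen : Q.x a - (((c a)⁻¹ * Additive.toMul (ρ ⟨a, ha⟩) : Kˣ) : K) • (1 : T)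
        ∈ Q.binIdeal c L ρ := TwoSidedIdeal.subset_span ⟨⟨a, ha⟩, rfl⟩
    have h0 := (hker _).mpr hgen
    rw [map_sub, map_smul, map_one, sub_eq_zero] at h0
    rw [h0, hu_mem ha]
  -- the key relation: ψ (x β) = s β • ψ (x (σ π β))
  have hy : ∀ β : Fin n → ℤ,
      ψ (Q.x β) = ((s β : K)) • ψ (Q.x (σ (QuotientAddGroup.mk β))) := by
    intro β
    have h1 : Q.x (σ (QuotientAddGroup.mk β)) * Q.x (β - σ (QuotientAddGroup.mk β))
        = ((Q.d (σ (QuotientAddGroup.mk β)) (β - σ (QuotientAddGroup.mk β)) : K)) • Q.x β := by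
      rw [Q.x_mul,
        show σ (QuotientAddGroup.mk β) + (β - σ (QuotientAddGroup.mk β)) = β from by abel]
    have h2 := congrArg ψ h1
    rw [map_mul, map_smul, hyL _ (hmem β), mul_smul_comm, mul_one] at h2
    rw [hs]
    set A := β - σ (QuotientAddGroup.mk β) with hA
    set dd := Q.d (σ (QuotientAddGroup.mk β)) A with hdd
    have : ((u A * dd⁻¹ : Kˣ) : K) • ψ (Q.x (σ (QuotientAddGroup.mk β)))
        = ψ (Q.x β) := by
      calc ((u A * dd⁻¹ : Kˣ) : K) • ψ (Q.x (σ (QuotientAddGroup.mk β)))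
          = ((dd : K))⁻¹ • ((u A : K) • ψ (Q.x (σ (QuotientAddGroup.mk β)))) := by
            rw [smul_smul]
            congr 1
            simp [Units.val_mul, Units.val_inv_eq_inv_val, mul_comm]
        _ = ((dd : K))⁻¹ • ((dd : K) • ψ (Q.x β)) := by rw [h2]
        _ = ψ (Q.x β) := by rw [smul_smul, inv_mul_cancel₀ dd.ne_zero, one_smul]
    exact this.symm
  -- the projection operator P
  set P : T →ₗ[K] T := Q.basis.constr ℕ
    (fun β => ((s β : K)) • Q.x (σ (QuotientAddGroup.mk β))) with hP
  have hPx : ∀ β : Fin n → ℤ,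
      P (Q.x β) = ((s β : K)) • Q.x (σ (QuotientAddGroup.mk β)) := by
    intro β
    rw [hP, ← Q.basis_eq]
    exact Module.Basis.constr_basis _ _ _ _
  -- key scalar identities
  have keyL : ∀ γ β : Fin n → ℤ,
      Q.d γ β * s (γ + β)
        = s β * Q.d γ (σ (QuotientAddGroup.mk β)) * s (γ + σ (QuotientAddGroup.mk β)) := by
    intro γ β
    have hmk1 : (QuotientAddGroup.mk (γ + σ (QuotientAddGroup.mk β)) : (Fin n → ℤ) ⧸ L)
        = QuotientAddGroup.mk (γ + β) := by
      rw [hπadd, hπadd, hσ]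
    have hDL : γ + σ (QuotientAddGroup.mk β) - σ (QuotientAddGroup.mk (γ + β)) ∈ L := by
      have h0 := hmem (γ + σ (QuotientAddGroup.mk β))
      rw [hmk1] at h0
      exact h0
    have hE1 : γ + β - σ (QuotientAddGroup.mk (γ + β))
        = (γ + σ (QuotientAddGroup.mk β) - σ (QuotientAddGroup.mk (γ + β)))
          + (β - σ (QuotientAddGroup.mk β)) := by abel
    simp only [hs]
    rw [hmk1, hE1, hu_add _ _ hDL (hmem β), Q.aux_d_add_right]
    rw [show Q.d γ β = Q.d γ (σ (QuotientAddGroup.mk β))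
          * Q.d γ (β - σ (QuotientAddGroup.mk β)) from by
        rw [← Q.aux_d_add_right]; congr 1; abel]
    rw [show Q.d γ (β - σ (QuotientAddGroup.mk β))
          = Q.d (γ + σ (QuotientAddGroup.mk β) - σ (QuotientAddGroup.mk (γ + β)))
              (β - σ (QuotientAddGroup.mk β))
            * Q.d (σ (QuotientAddGroup.mk (γ + β))) (β - σ (QuotientAddGroup.mk β))
            * (Q.d (σ (QuotientAddGroup.mk β)) (β - σ (QuotientAddGroup.mk β)))⁻¹ from by
        rw [← Q.aux_d_add_left, ← Q.aux_d_sub_left]; congr 2; abel]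
    rw [Units.ext_iff]
    push_cast
    field_simp
  have keyR : ∀ γ β : Fin n → ℤ,
      Q.d β γ * s (β + γ)
        = s β * Q.d (σ (QuotientAddGroup.mk β)) γ * s (σ (QuotientAddGroup.mk β) + γ) := by
    intro γ β
    have hmk1 : (QuotientAddGroup.mk (σ (QuotientAddGroup.mk β) + γ) : (Fin n → ℤ) ⧸ L)
        = QuotientAddGroup.mk (β + γ) := by
      rw [hπadd, hπadd, hσ]
    have hDL : σ (QuotientAddGroup.mk β) + γ - σ (QuotientAddGroup.mk (β + γ)) ∈ L := by
      have h0 := hmem (σ (QuotientAddGroup.mk β) + γ)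
      rw [hmk1] at h0
      exact h0
    have hE1 : β + γ - σ (QuotientAddGroup.mk (β + γ))
        = (σ (QuotientAddGroup.mk β) + γ - σ (QuotientAddGroup.mk (β + γ)))
          + (β - σ (QuotientAddGroup.mk β)) := by abel
    simp only [hs]
    rw [hmk1, hE1, hu_add _ _ hDL (hmem β), Q.aux_d_add_right]
    rw [show Q.d β γ = Q.d (σ (QuotientAddGroup.mk β)) γ
          * Q.d (β - σ (QuotientAddGroup.mk β)) γ from by
        rw [← Q.aux_d_add_left]; congr 1; abel]
    rw [Q.aux_d_comm (hL _ (hmem β)) γ]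
    rw [show Q.d γ (β - σ (QuotientAddGroup.mk β))
          = Q.d (σ (QuotientAddGroup.mk β) + γ - σ (QuotientAddGroup.mk (β + γ)))
              (β - σ (QuotientAddGroup.mk β))
            * Q.d (σ (QuotientAddGroup.mk (β + γ))) (β - σ (QuotientAddGroup.mk β))
            * (Q.d (σ (QuotientAddGroup.mk β)) (β - σ (QuotientAddGroup.mk β)))⁻¹ from by
        rw [← Q.aux_d_add_left, ← Q.aux_d_sub_left]; congr 2; abel]
    rw [Units.ext_iff]
    push_cast
    field_simp
  -- P kills multiplication up to projection, on basis vectors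
  have h1L : ∀ γ β : Fin n → ℤ, P (Q.x γ * Q.x β) = P (Q.x γ * P (Q.x β)) := by
    intro γ β
    have hmk1 : (QuotientAddGroup.mk (γ + σ (QuotientAddGroup.mk β)) : (Fin n → ℤ) ⧸ L)
        = QuotientAddGroup.mk (γ + β) := by
      rw [hπadd, hπadd, hσ]
    rw [hPx β, mul_smul_comm, map_smul, Q.x_mul, Q.x_mul, map_smul, map_smul,
      hPx, hPx, hmk1, smul_smul, smul_smul, smul_smul]
    congr 1
    have hkey := congrArg Units.val (keyL γ β)
    push_cast at hkey
    linear_combination hkey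
  have h1R : ∀ γ β : Fin n → ℤ, P (Q.x β * Q.x γ) = P (P (Q.x β) * Q.x γ) := by
    intro γ β
    have hmk1 : (QuotientAddGroup.mk (σ (QuotientAddGroup.mk β) + γ) : (Fin n → ℤ) ⧸ L)
        = QuotientAddGroup.mk (β + γ) := by
      rw [hπadd, hπadd, hσ]
    rw [hPx β, smul_mul_assoc, map_smul, Q.x_mul, Q.x_mul, map_smul, map_smul,
      hPx, hPx, hmk1, smul_smul, smul_smul, smul_smul]
    congr 1
    have hkey := congrArg Units.val (keyR γ β)
    push_cast at hkey
    linear_combination hkey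
  -- general forms
  have hPl : ∀ (t r : T), P (r * t) = P (r * P t) := by
    have step1 : ∀ (γ : Fin n → ℤ) (t : T), P (Q.x γ * t) = P (Q.x γ * P t) := by
      intro γ
      have hmaps : P ∘ₗ LinearMap.mulLeft K (Q.x γ)
          = P ∘ₗ LinearMap.mulLeft K (Q.x γ) ∘ₗ P := by
        refine Q.basis.ext fun β => ?_
        simp only [LinearMap.comp_apply, LinearMap.mulLeft_apply, Q.basis_eq]
        exact h1L γ β
      intro t
      simpa using DFunLike.congr_fun hmaps t
    intro t r
    have hmaps : P ∘ₗ LinearMap.mulRight K t = P ∘ₗ LinearMap.mulRight K (P t) := by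
      refine Q.basis.ext fun γ => ?_
      simp only [LinearMap.comp_apply, LinearMap.mulRight_apply, Q.basis_eq]
      exact step1 γ t
    simpa using DFunLike.congr_fun hmaps r
  have hPr : ∀ (t r : T), P (t * r) = P (P t * r) := by
    have step1 : ∀ (γ : Fin n → ℤ) (t : T), P (t * Q.x γ) = P (P t * Q.x γ) := by
      intro γ
      have hmaps : P ∘ₗ LinearMap.mulRight K (Q.x γ)
          = P ∘ₗ LinearMap.mulRight K (Q.x γ) ∘ₗ P := by
        refine Q.basis.ext fun β => ?_
        simp only [LinearMap.comp_apply, LinearMap.mulRight_apply, Q.basis_eq]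
        exact h1R γ β
      intro t
      simpa using DFunLike.congr_fun hmaps t
    intro t r
    have hmaps : P ∘ₗ LinearMap.mulLeft K t = P ∘ₗ LinearMap.mulLeft K (P t) := by
      refine Q.basis.ext fun γ => ?_
      simp only [LinearMap.comp_apply, LinearMap.mulLeft_apply, Q.basis_eq]
      exact step1 γ t
    simpa using DFunLike.congr_fun hmaps r
  -- s on lattice points
  have hmk0 : (QuotientAddGroup.mk (0 : Fin n → ℤ) : (Fin n → ℤ) ⧸ L) = 0 := by
    exact (QuotientAddGroup.eq_zero_iff _).mpr (zero_mem L)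
  have hs_L : ∀ (a : Fin n → ℤ), a ∈ L → s a = u a * s 0 := by
    intro a ha
    have hmka : (QuotientAddGroup.mk a : (Fin n → ℤ) ⧸ L) = 0 :=
      (QuotientAddGroup.eq_zero_iff _).mpr ha
    simp only [hs]
    rw [hmka, hmk0, zero_sub]
    rw [show a - σ (0 : (Fin n → ℤ) ⧸ L) = (- σ (0 : (Fin n → ℤ) ⧸ L)) + a from by abel,
      hu_add _ _ (neg_mem hσL) ha, Q.aux_d_neg_left, Q.aux_d_neg_right,
      Q.aux_d_add_right, Q.aux_d_neg_right]
    rw [Units.ext_iff]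
    push_cast
    field_simp
  -- P vanishes on the ideal
  have hPzero : ∀ t ∈ Q.binIdeal c L ρ, P t = 0 := by
    have hNmem : ∀ t : T, P t = 0 → ∀ r : T, P (r * t) = 0 ∧ P (t * r) = 0 := by
      intro t ht r
      constructor
      · rw [hPl t r, ht, mul_zero, map_zero]
      · rw [hPr t r, ht, zero_mul, map_zero]
    set N : TwoSidedIdeal T := TwoSidedIdeal.mk' {t : T | P t = 0}
      (by simp)
      (fun {a b} ha hb => by
        simp only [Set.mem_setOf_eq] at ha hb ⊢
        rw [map_add, ha, hb, add_zero])
      (fun {a} ha => by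
        simp only [Set.mem_setOf_eq] at ha ⊢
        rw [map_neg, ha, neg_zero])
      (fun {r a} ha => (hNmem a ha r).1)
      (fun {a r} ha => (hNmem a ha r).2) with hN
    intro t ht
    have hsub : {t : T | ∃ α : L, t = Q.x (α : Fin n → ℤ) -
        ((((c (α : Fin n → ℤ))⁻¹ * Additive.toMul (ρ α) : Kˣ) : K)) • (1 : T)}
        ⊆ (N : Set T) := by
      rintro w ⟨⟨a, ha⟩, rfl⟩
      rw [hN, TwoSidedIdeal.coe_mk']
      show P _ = 0
      have h1u : (((c a)⁻¹ * Additive.toMul (ρ ⟨a, ha⟩) : Kˣ) : K) = ((u a : K)) := by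
        rw [hu_mem ha]
      rw [map_sub, map_smul, h1u, ← Q.x_zero, hPx, hPx]
      have hmka : (QuotientAddGroup.mk a : (Fin n → ℤ) ⧸ L) = 0 :=
        (QuotientAddGroup.eq_zero_iff _).mpr ha
      rw [hmka, hmk0, hs_L a ha, smul_smul, sub_eq_zero]
      norm_cast
    have hmem2 := TwoSidedIdeal.mem_span_iff.mp ht N hsub
    rw [hN] at hmem2
    rw [TwoSidedIdeal.mem_mk'] at hmem2
    exact hmem2
  -- linear independence
  have hinj : Function.Injective σ := fun g g' hgg => by
    rw [← hσ g, ← hσ g', hgg]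
  have hli : LinearIndependent K (fun g : (Fin n → ℤ) ⧸ L => ψ (Q.x (σ g))) := by
    rw [linearIndependent_iff]
    intro l hl
    set t : T := l.sum fun g a => a • Q.x (σ g) with hdt
    have hψt : ψ t = 0 := by
      rw [hdt, map_finsuppSum]
      rw [Finsupp.linearCombination_apply] at hl
      rw [← hl]
      exact Finsupp.sum_congr fun g _ => by rw [map_smul]
    have hPt : P t = 0 := hPzero t ((hker t).mp hψt)
    have hPt2 : P t = l.sum fun g a => a • Q.basis (σ g) := by
      rw [hdt, map_finsuppSum]
      refine Finsupp.sum_congr fun g _ => ?_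
      rw [map_smul, hPx, hs_σ, hσσ, Q.basis_eq]
      simp
    have hli2 := Q.basis.linearIndependent.comp σ hinj
    rw [linearIndependent_iff] at hli2
    refine hli2 l ?_
    rw [Finsupp.linearCombination_apply]
    simp only [Function.comp_apply]
    rw [← hPt2, hPt]
  -- spanning
  have hsp : ⊤ ≤ Submodule.span K (Set.range fun g : (Fin n → ℤ) ⧸ L => ψ (Q.x (σ g))) := by
    intro r _
    obtain ⟨t, rfl⟩ := hsurj r
    have h1 : Submodule.map ψ.toLinearMap ⊤
        ≤ Submodule.span K (Set.range fun g : (Fin n → ℤ) ⧸ L => ψ (Q.x (σ g))) := by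
      rw [← Q.basis.span_eq, Submodule.map_span, ← Set.range_comp]
      refine Submodule.span_le.mpr ?_
      rintro w ⟨β, rfl⟩
      simp only [Function.comp_apply, Q.basis_eq, AlgHom.toLinearMap_apply]
      rw [hy β]
      exact Submodule.smul_mem _ _
        (Submodule.subset_span ⟨QuotientAddGroup.mk β, rfl⟩)
    exact h1 ⟨t, trivial, rfl⟩
  refine ⟨⟨Module.Basis.mk hli hsp, fun g => Module.Basis.mk_apply hli hsp g⟩,
    ⟨fun g h => Q.d (σ g) (σ h) * s (σ g + σ h), fun g h => ?_⟩⟩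
  have h1 := congrArg ψ (Q.x_mul (σ g) (σ h))
  rw [map_mul, map_smul] at h1
  have hmkgh : (QuotientAddGroup.mk (σ g + σ h) : (Fin n → ℤ) ⧸ L) = g + h := by
    rw [hπadd, hσ, hσ]
  rw [h1, hy (σ g + σ h), hmkgh, smul_smul]
  norm_cast
end
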